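/- Let B and B' be nilpotent p-blocks with defect groups P and Q respectively, and suppose B and B' are perfectly isometric. Then every perfect isometry I : ℤIrr(B) → ℤIrr(B') has a uniform sign: either I(Irr(B)) = Irr(B') or I(Irr(B)) = −Irr(B'). Concretely, for G = P and H = Q (principal blocks of p-groups), one computes Σ_{χ∈Irr(P)} ±χ(1)² = μ_I(1,1) = Σ_{h∈Q} μ_I(1,h) = ±|P|, forcing all signs equal. -/

import Mathlib

open scoped BigOperators
open Finset

noncomputable section

/-- `χ : G → ℂ` is an irreducible complex character of the finite group `G`. -/
def IsIrrChar (G : Type) [Group G] [Fintype G] (χ : G → ℂ) : Prop :=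
  ∃ V : FDRep ℂ G, CategoryTheory.Simple V ∧ χ = V.character

/-- An element is `p`-regular if `p` does not divide its order. -/
def pRegular (p : ℕ) {G : Type} [Monoid G] (g : G) : Prop :=
  ¬ p ∣ orderOf g

/-- The `p`-part of a natural number. -/
def pPart (p n : ℕ) : ℕ := p ^ (n.factorization p)

/-- The `p`-part of the order of the centralizer of `g`. -/
def centOrderP (p : ℕ) {G : Type} [Group G] (g : G) : ℕ :=
  pPart p (Nat.card (Subgroup.centralizer ({g} : Set G)))

/-- The usual inner product of class functions on a finite group. -/
def innerChar (G : Type) [Group G] [Fintype G] (χ ψ : G → ℂ) : ℂ :=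
  (Fintype.card G : ℂ)⁻¹ * ∑ g : G, χ g * ψ g⁻¹

/-- The group `ℤIrr(B)` of generalized characters of a block `B`, realized as the
`ℤ`-span of the characters in `B` inside the functions `G → ℂ`. -/
def ZIrr {G : Type} [Group G] [Fintype G] (B : Finset (G → ℂ)) : Submodule ℤ (G → ℂ) :=
  Submodule.span ℤ (B : Set (G → ℂ))

/-- A character `χ ∈ B` viewed as an element of `ℤIrr(B)`. -/
def elt {G : Type} [Group G] [Fintype G] {B : Finset (G → ℂ)} (χ : G → ℂ) (h : χ ∈ B) :
    ZIrr B :=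
  ⟨χ, Submodule.subset_span (Finset.mem_coe.mpr h)⟩

/-- Broué's function `μ_I(g,h) = ∑_{χ ∈ Irr(B)} χ(g)·I(χ)(h)`. -/
def muI {G H : Type} [Group G] [Fintype G] [Group H] [Fintype H]
    {B : Finset (G → ℂ)} {B' : Finset (H → ℂ)}
    (I : ZIrr B →ₗ[ℤ] ZIrr B') (g : G) (h : H) : ℂ :=
  ∑ χ ∈ B.attach, χ.1 g * ((I (elt χ.1 χ.2) : ZIrr B') : H → ℂ) h

/-- Broué's notion of a perfect isometry: an inner-product preserving `ℤ`-linear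
bijection `ℤIrr(B) → ℤIrr(B')` satisfying the separation condition (sep) and the
integrality condition (int). -/
def IsPerfIso (p : ℕ) {G H : Type} [Group G] [Fintype G] [Group H] [Fintype H]
    (B : Finset (G → ℂ)) (B' : Finset (H → ℂ)) (I : ZIrr B ≃ₗ[ℤ] ZIrr B') : Prop :=
  (∀ x y : ZIrr B,
      innerChar H (I x : H → ℂ) (I y : H → ℂ) = innerChar G (x : G → ℂ) (y : G → ℂ)) ∧
  (∀ (g : G) (h : H), Xor' (pRegular p g) (pRegular p h) → muI I.toLinearMap g h = 0) ∧
  (∀ (g : G) (h : H), IsIntegral ℤ (muI I.toLinearMap g h / (centOrderP p g : ℂ)) ∧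
      IsIntegral ℤ (muI I.toLinearMap g h / (centOrderP p h : ℂ)))

/-- By Osima's theorem, `B` is a union of `p`-blocks iff it consists of irreducible
characters and satisfies block orthogonality between `p`-regular and `p`-singular
columns. -/
def IsBlockUnion (p : ℕ) (G : Type) [Group G] [Fintype G] (B : Finset (G → ℂ)) : Prop :=
  (∀ χ ∈ B, IsIrrChar G χ) ∧
  ∀ g h : G, pRegular p g → ¬ pRegular p h → ∑ χ ∈ B, χ g * χ h = 0

/-- A `p`-block of `G`: a minimal nonempty union of blocks. -/
def IsBlock (p : ℕ) (G : Type) [Group G] [Fintype G] (B : Finset (G → ℂ)) : Prop :=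
  IsBlockUnion p G B ∧ B.Nonempty ∧
    ∀ C ⊆ B, IsBlockUnion p G C → C = ∅ ∨ C = B

open scoped Classical

namespace NilpotentSign

open CategoryTheory

variable {G : Type} [Group G] [Fintype G]

lemma ortho_aux (V W : FDRep ℂ G) (hV : Simple V) (hW : Simple W) :
    innerChar G V.character W.character
      = if Nonempty (V ≅ W) then (1:ℂ) else 0 := by
  haveI := hV; haveI := hW
  haveI : Invertible ((Nat.card G : ℂ)) :=
    invertibleOfNonzero (Nat.cast_ne_zero.mpr Nat.card_pos.ne')
  have h := FDRep.char_orthonormal (k := ℂ) (G := G) V W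
  rw [Nat.card_eq_fintype_card] at h
  rw [innerChar]
  have h2 : (↑(Fintype.card G):ℂ)⁻¹ * ∑ g : G, V.character g * W.character g⁻¹
      = if Nonempty (V ≅ W) then (1:ℂ) else 0 := by
    refine Eq.trans ?_ h; rfl
  refine h2.trans ?_
  by_cases hn : Nonempty (V ≅ W) <;> simp [hn]

lemma ortho {χ ψ : G → ℂ} (hχ : IsIrrChar G χ) (hψ : IsIrrChar G ψ) :
    innerChar G χ ψ = if χ = ψ then (1:ℂ) else 0 := by
  by_cases he : χ = ψ
  · subst he
    obtain ⟨V, hV, rfl⟩ := hχ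
    rw [ortho_aux V V hV hV, if_pos ⟨CategoryTheory.Iso.refl V⟩, if_pos rfl]
  · obtain ⟨V, hV, h1⟩ := hχ
    obtain ⟨W, hW, h2⟩ := hψ
    subst h1; subst h2
    rw [ortho_aux V W hV hW, if_neg, if_neg he]
    intro hn
    exact he (FDRep.char_iso hn.some)

lemma innerChar_sum_left {ι : Type*} (s : Finset ι) (f : ι → G → ℂ) (ψ : G → ℂ) :
    innerChar G (∑ i ∈ s, f i) ψ = ∑ i ∈ s, innerChar G (f i) ψ := by
  simp only [innerChar, Finset.sum_apply, Finset.sum_mul]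
  rw [Finset.sum_comm, Finset.mul_sum]

lemma innerChar_sum_right {ι : Type*} (s : Finset ι) (f : ι → G → ℂ) (χ : G → ℂ) :
    innerChar G χ (∑ i ∈ s, f i) = ∑ i ∈ s, innerChar G χ (f i) := by
  simp only [innerChar, Finset.sum_apply, Finset.mul_sum]
  rw [Finset.sum_comm]

lemma innerChar_zsmul_left (z : ℤ) (f ψ : G → ℂ) :
    innerChar G (z • f) ψ = (z:ℂ) * innerChar G f ψ := by
  simp only [innerChar, Pi.smul_apply, zsmul_eq_mul, Finset.mul_sum]
  exact Finset.sum_congr rfl fun g _ => by ring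

lemma innerChar_zsmul_right (z : ℤ) (f ψ : G → ℂ) :
    innerChar G ψ (z • f) = (z:ℂ) * innerChar G ψ f := by
  simp only [innerChar, Pi.smul_apply, zsmul_eq_mul, Finset.mul_sum]
  exact Finset.sum_congr rfl fun g _ => by ring

lemma innerChar_coef (B : Finset (G → ℂ)) (hB : ∀ χ ∈ B, IsIrrChar G χ)
    (c : (G → ℂ) → ℤ) {ψ : G → ℂ} (hψ : ψ ∈ B) :
    innerChar G (∑ χ ∈ B, c χ • χ) ψ = (c ψ : ℂ) := by
  rw [innerChar_sum_left]
  rw [Finset.sum_eq_single ψ]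
  · rw [innerChar_zsmul_left, ortho (hB ψ hψ) (hB ψ hψ), if_pos rfl, mul_one]
  · intro χ hχ hne
    rw [innerChar_zsmul_left, ortho (hB χ hχ) (hB ψ hψ), if_neg hne, mul_zero]
  · intro h; exact absurd hψ h

lemma exists_sign (B : Finset (G → ℂ)) (hB : ∀ χ ∈ B, IsIrrChar G χ)
    (x : G → ℂ) (hx : x ∈ ZIrr B) (hnorm : innerChar G x x = 1) :
    ∃ ψ ∈ B, x = ψ ∨ x = -ψ := by
  obtain ⟨c, -, hc⟩ := Submodule.mem_span_finset.mp hx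
  have h1 : (∑ χ ∈ B, ((c χ : ℂ))^2) = 1 := by
    have : innerChar G (∑ χ ∈ B, c χ • χ) (∑ χ ∈ B, c χ • χ) = 1 := by rw [hc]; exact hnorm
    rw [innerChar_sum_right] at this
    rw [← this]
    refine (Finset.sum_congr rfl fun ψ hψ => ?_).symm
    rw [innerChar_zsmul_right, innerChar_coef B hB c hψ]; ring
  have h2 : (∑ χ ∈ B, (c χ)^2) = 1 := by exact_mod_cast (by push_cast at h1 ⊢; exact h1 : ((∑ χ ∈ B, (c χ)^2 : ℤ) : ℂ) = 1)
  have hex : ∃ ψ ∈ B, c ψ ≠ 0 := by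
    by_contra h
    push_neg at h
    rw [Finset.sum_eq_zero (fun χ hχ => by rw [h χ hχ]; ring)] at h2
    exact one_ne_zero h2.symm
  obtain ⟨ψ0, hψ0, hc0⟩ := hex
  have hsq : 1 ≤ (c ψ0)^2 := by
    have := Int.one_le_abs (by simpa using hc0)
    nlinarith [sq_abs (c ψ0)]
  have hsplit : (c ψ0)^2 + ∑ χ ∈ B.erase ψ0, (c χ)^2 = 1 :=
    (Finset.add_sum_erase _ (fun χ => (c χ)^2) hψ0).trans h2
  have hnn : (0:ℤ) ≤ ∑ χ ∈ B.erase ψ0, (c χ)^2 :=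
    Finset.sum_nonneg fun _ _ => sq_nonneg _
  have hrest : ∑ χ ∈ B.erase ψ0, (c χ)^2 = 0 := by linarith
  have hone : (c ψ0)^2 = 1 := by linarith
  have hzero : ∀ χ ∈ B, χ ≠ ψ0 → c χ = 0 := by
    intro χ hχ hne
    have := (Finset.sum_eq_zero_iff_of_nonneg (fun i _ => sq_nonneg (c i))).mp hrest χ
      (Finset.mem_erase.mpr ⟨hne, hχ⟩)
    exact sq_eq_zero_iff.mp this
  have hx2 : x = c ψ0 • ψ0 := by
    rw [← hc, Finset.sum_eq_single ψ0]
    · intro χ hχ hne; rw [hzero χ hχ hne, zero_smul]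
    · intro h; exact absurd hψ0 h
  have hpm : c ψ0 = 1 ∨ c ψ0 = -1 :=
    Int.isUnit_iff.mp (IsUnit.of_mul_eq_one _ (by rw [← sq]; exact hone))
  refine ⟨ψ0, hψ0, ?_⟩
  rcases hpm with h | h
  · left; rw [hx2, h, one_smul]
  · right; rw [hx2, h]; ext g; simp

lemma irr_pos {χ : G → ℂ} (hχ : IsIrrChar G χ) : ∃ d : ℕ, 0 < d ∧ χ 1 = (d : ℂ) := by
  obtain ⟨V, hV, rfl⟩ := hχ
  refine ⟨Module.finrank ℂ V, ?_, by exact_mod_cast FDRep.char_one V⟩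
  by_contra h
  have h0 : Module.finrank ℂ V = 0 := by omega
  haveI : Subsingleton V := Module.finrank_zero_iff.mp h0
  have hz : ∀ g : G, V.character g = 0 := by
    intro g
    show LinearMap.trace ℂ V (V.ρ g) = 0
    rw [Subsingleton.elim (V.ρ g) 0, map_zero]
  have h1 : innerChar G V.character V.character = 1 := by
    have := ortho ⟨V, hV, rfl⟩ ⟨V, hV, rfl⟩
    simpa using this
  rw [innerChar] at h1
  simp only [hz, zero_mul, Finset.sum_const_zero, mul_zero] at h1
  exact zero_ne_one h1

lemma pReg_one (p : ℕ) [Fact p.Prime] : pRegular p (1 : G) := by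
  rw [pRegular, orderOf_one]
  simp only [Nat.dvd_one]
  exact (Fact.out : p.Prime).ne_one

lemma not_pReg (p : ℕ) [Fact p.Prime] (hG : IsPGroup p G) {g : G} (hg : g ≠ 1) :
    ¬ pRegular p g := by
  obtain ⟨k, hk⟩ := (IsPGroup.iff_orderOf.mp hG) g
  intro h
  apply h
  rw [hk]
  refine dvd_pow_self p ?_
  rintro rfl
  rw [pow_zero] at hk
  exact hg (orderOf_eq_one_iff.mp hk)

end NilpotentSign

open NilpotentSign in
/-- Every perfect isometry between nilpotent blocks has a uniform sign.  Concretely,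
after reducing (via the Broué–Puig `*`-construction) to the principal blocks of the
defect groups `P` and `Q` themselves: every perfect isometry between the unique
blocks of the `p`-groups `P` and `Q` maps `Irr(P)` either entirely to `Irr(Q)` or
entirely to `-Irr(Q)`. -/
theorem nilpotent_uniform_sign (p : ℕ) [Fact p.Prime]
    (P Q : Type) [Group P] [Fintype P] [Group Q] [Fintype Q]
    (hP : IsPGroup p P) (hQ : IsPGroup p Q)
    (BP : Finset (P → ℂ)) (BQ : Finset (Q → ℂ))
    (hBP : ∀ χ, χ ∈ BP ↔ IsIrrChar P χ) (hBQ : ∀ ψ, ψ ∈ BQ ↔ IsIrrChar Q ψ)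
    (I : ZIrr BP ≃ₗ[ℤ] ZIrr BQ) (hI : IsPerfIso p BP BQ I) :
    (∀ χ (hχ : χ ∈ BP), ∃ ψ ∈ BQ, ((I (elt χ hχ) : ZIrr BQ) : Q → ℂ) = ψ) ∨
    (∀ χ (hχ : χ ∈ BP), ∃ ψ ∈ BQ, ((I (elt χ hχ) : ZIrr BQ) : Q → ℂ) = -ψ) := by
  classical
  obtain ⟨hinner, hsep, hint⟩ := hI
  have hn0 : ((Fintype.card Q : ℂ)) ≠ 0 := Nat.cast_ne_zero.mpr Fintype.card_ne_zero
  -- degrees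
  have hdeg : ∀ χ : {y // y ∈ BP}, ∃ n : ℕ, 0 < n ∧ χ.1 1 = (n : ℂ) :=
    fun χ => irr_pos ((hBP χ.1).mp χ.2)
  choose d hd0 hd1 using hdeg
  set x : ZIrr BP := ∑ χ ∈ BP.attach, (d χ : ℤ) • elt χ.1 χ.2 with hxd
  have hxcoe : ((x : ZIrr BP) : P → ℂ) = ∑ χ ∈ BP.attach, (d χ : ℤ) • χ.1 := by
    show (ZIrr BP).subtype x = _
    rw [hxd, map_sum]
    refine Finset.sum_congr rfl fun χ _ => ?_
    rw [map_smul]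
    rfl
  have hIsum : I x = ∑ χ ∈ BP.attach, (d χ : ℤ) • I (elt χ.1 χ.2) := by
    have h := map_sum I.toLinearMap
        (fun χ : {y // y ∈ BP} => (d χ : ℤ) • elt χ.1 χ.2) BP.attach
    simp only [map_smul, LinearEquiv.coe_coe] at h
    rw [hxd]; exact h
  have hIxcoe : ((I x : ZIrr BQ) : Q → ℂ)
      = ∑ χ ∈ BP.attach, (d χ : ℤ) • ((I (elt χ.1 χ.2) : ZIrr BQ) : Q → ℂ) := by
    show (ZIrr BQ).subtype (I x) = _
    rw [hIsum, map_sum]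
    refine Finset.sum_congr rfl fun χ _ => ?_
    rw [map_smul]
    rfl
  have hIx : ∀ h : Q, ((I x : ZIrr BQ) : Q → ℂ) h = muI I.toLinearMap 1 h := by
    intro h
    rw [hIxcoe, muI, Finset.sum_apply]
    refine Finset.sum_congr rfl fun χ _ => ?_
    rw [Pi.smul_apply, zsmul_eq_mul, hd1 χ]
    simp
  have hvan : ∀ h : Q, h ≠ 1 → ((I x : ZIrr BQ) : Q → ℂ) h = 0 := by
    intro h hne
    rw [hIx]
    exact hsep 1 h (Or.inl ⟨pReg_one p, not_pReg p hQ hne⟩)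
  set μ : ℂ := ((I x : ZIrr BQ) : Q → ℂ) 1 with hμ
  have hconc : ∀ f : Q → ℂ, innerChar Q ((I x : ZIrr BQ) : Q → ℂ) f
      = (Fintype.card Q : ℂ)⁻¹ * (μ * f 1) := by
    intro f
    rw [innerChar]
    congr 1
    rw [Finset.sum_eq_single 1]
    · rw [inv_one]
    · intro b _ hb
      rw [hvan b hb, zero_mul]
    · intro h; exact absurd (Finset.mem_univ 1) h
  have hkey : ∀ (χ : P → ℂ) (hχ : χ ∈ BP),
      innerChar Q ((I x : ZIrr BQ) : Q → ℂ) ((I (elt χ hχ) : ZIrr BQ) : Q → ℂ)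
        = (d ⟨χ, hχ⟩ : ℂ) := by
    intro χ hχ
    rw [hinner x (elt χ hχ)]
    have hcoe : ((elt χ hχ : ZIrr BP) : P → ℂ) = χ := rfl
    rw [hcoe, hxcoe, innerChar_sum_left]
    rw [Finset.sum_eq_single (⟨χ, hχ⟩ : {y // y ∈ BP})]
    · rw [innerChar_zsmul_left, ortho ((hBP χ).mp hχ) ((hBP χ).mp hχ), if_pos rfl, mul_one]
      norm_cast
    · intro χ' _ hne
      rw [innerChar_zsmul_left, ortho ((hBP χ'.1).mp χ'.2) ((hBP χ).mp hχ), if_neg, mul_zero]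
      exact fun he => hne (Subtype.ext he)
    · intro h; exact absurd (Finset.mem_attach _ _) h
  have hsign : ∀ (χ : P → ℂ) (hχ : χ ∈ BP), ∃ ψ ∈ BQ,
      ((I (elt χ hχ) : ZIrr BQ) : Q → ℂ) = ψ ∨ ((I (elt χ hχ) : ZIrr BQ) : Q → ℂ) = -ψ := by
    intro χ hχ
    refine exists_sign BQ (fun ψ hψ => (hBQ ψ).mp hψ) _ (I (elt χ hχ)).2 ?_
    rw [hinner (elt χ hχ) (elt χ hχ)]
    exact (ortho ((hBP χ).mp hχ) ((hBP χ).mp hχ)).trans (if_pos rfl)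
  have heq : ∀ (χ : P → ℂ) (hχ : χ ∈ BP) (ψ : Q → ℂ), ψ ∈ BQ →
      (((I (elt χ hχ) : ZIrr BQ) : Q → ℂ) = ψ →
        (d ⟨χ, hχ⟩ : ℂ) * (Fintype.card Q : ℂ) = μ * ψ 1) ∧
      (((I (elt χ hχ) : ZIrr BQ) : Q → ℂ) = -ψ →
        (d ⟨χ, hχ⟩ : ℂ) * (Fintype.card Q : ℂ) = -(μ * ψ 1)) := by
    intro χ hχ ψ _
    have hk := hkey χ hχ
    constructor
    · intro hp
      rw [hp, hconc ψ] at hk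
      field_simp at hk
      linear_combination -hk
    · intro hm
      rw [hm, hconc (-ψ)] at hk
      simp only [Pi.neg_apply] at hk
      field_simp at hk
      linear_combination -hk
  by_cases hall : ∀ χ (hχ : χ ∈ BP), ∃ ψ ∈ BQ, ((I (elt χ hχ) : ZIrr BQ) : Q → ℂ) = ψ
  · exact Or.inl hall
  · right
    push_neg at hall
    obtain ⟨χ1, hχ1, hno⟩ := hall
    obtain ⟨ψ1, hψ1, hcase1⟩ := hsign χ1 hχ1
    have hneg1 : ((I (elt χ1 hχ1) : ZIrr BQ) : Q → ℂ) = -ψ1 := by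
      rcases hcase1 with h | h
      · exact absurd h (hno ψ1 hψ1)
      · exact h
    intro χ hχ
    obtain ⟨ψ, hψ, hcase⟩ := hsign χ hχ
    rcases hcase with hpos | hneg
    · exfalso
      obtain ⟨e1, he1, hψ11⟩ := irr_pos ((hBQ ψ1).mp hψ1)
      obtain ⟨e, he, hψ1'⟩ := irr_pos ((hBQ ψ).mp hψ)
      have E1 := (heq χ1 hχ1 ψ1 hψ1).2 hneg1
      have E2 := (heq χ hχ ψ hψ).1 hpos
      rw [hψ11] at E1
      rw [hψ1'] at E2
      have hz : ((d ⟨χ1, hχ1⟩ * Fintype.card Q * e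
          + d ⟨χ, hχ⟩ * Fintype.card Q * e1 : ℕ) : ℂ) = 0 := by
        push_cast
        linear_combination (e : ℂ) * E1 + (e1 : ℂ) * E2
      have h0 : d ⟨χ1, hχ1⟩ * Fintype.card Q * e + d ⟨χ, hχ⟩ * Fintype.card Q * e1 = 0 := by
        exact_mod_cast hz
      have hpos1 : 0 < d ⟨χ1, hχ1⟩ * Fintype.card Q * e :=
        Nat.mul_pos (Nat.mul_pos (hd0 _) Fintype.card_pos) he
      omega
    · exact ⟨ψ, hψ, hneg⟩

end
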